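/- For every k and t there is a bound b_k ∈ ℕ, depending only on k, t and |Cores| and not on the program, such that for every program P, every t-reordering bounded trace σ ∈ events(P)^perm, and every index 0 ≤ j ≤ |σ|, the set of k-active instructions satisfies |AC_k(j)| ≤ b_k. -/

import Mathlib

namespace USpec

/-- An instruction: its core identifier, its label (index in the instruction
stream), and its operation. -/
structure Instr (Core Op : Type) where
  core : Core
  lbl  : ℕ
  op   : Op
  deriving DecidableEq

/-- An event `i.st`: instruction `i` performing at stage `st`. -/
structure Event (Core Stage Op : Type) where
  instr : Instr Core Op
  stage : Stage
  deriving DecidableEq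

/-- A program: a finite instruction stream for each core. -/
abbrev Program (Core Op : Type) := Core → List Op

/-- The set of instructions of a program. -/
def instrs {Core Op : Type} (P : Program Core Op) : Set (Instr Core Op) :=
  {i | (P i.core)[i.lbl]? = some i.op}

/-- The events generated by a set of instructions. -/
def eventsOf {Core Op : Type} (Stage : Type) (I : Set (Instr Core Op)) :
    Set (Event Core Stage Op) :=
  {e | e.instr ∈ I}

/-- The set of events of a program: one event per instruction and stage. -/
def events {Core Op : Type} (Stage : Type) (P : Program Core Op) :
    Set (Event Core Stage Op) :=
  eventsOf Stage (instrs P)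

/-- Reference (program) order on instructions: same core, smaller label. -/
def refLt {Core Op : Type} (i' i : Instr Core Op) : Prop :=
  i'.core = i.core ∧ i'.lbl < i.lbl

/-- Quantifier-free part of a universal μspec axiom with `k` quantified
instruction variables: Boolean combinations of reference-order atoms,
happens-before atoms, and predicate-application atoms. -/
inductive Phi (k : ℕ) (Stage PSym : Type) (ar : PSym → ℕ) : Type
  | refOrd (a b : Fin k)
  | hb (a : Fin k) (st : Stage) (b : Fin k) (st' : Stage)
  | pred (p : PSym) (args : Fin (ar p) → Fin k)
  | conj (φ ψ : Phi k Stage PSym ar)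
  | disj (φ ψ : Phi k Stage PSym ar)
  | neg (φ : Phi k Stage PSym ar)

/-- A universal axiom `∀ i1 ⋯ ∀ ik, φ(i1,…,ik)`. -/
structure UAxiom (Stage PSym : Type) (ar : PSym → ℕ) where
  k : ℕ
  phi : Phi k Stage PSym ar

/-- Evaluation of the quantifier-free part `φ` under an assignment `s` of the
variables to instructions, where `R` is the happens-before relation (the
transitive closure of the edges of the graph under consideration) and
`interp` interprets the predicate symbols over operations. -/
def Sat {Core Stage Op PSym : Type} {ar : PSym → ℕ} {k : ℕ}
    (interp : ∀ p : PSym, (Fin (ar p) → Op) → Prop)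
    (R : Event Core Stage Op → Event Core Stage Op → Prop)
    (s : Fin k → Instr Core Op) : Phi k Stage PSym ar → Prop
  | .refOrd a b => refLt (s a) (s b)
  | .hb a st b st' => R ⟨s a, st⟩ ⟨s b, st'⟩
  | .pred p args => interp p fun j => (s (args j)).op
  | .conj φ ψ => Sat interp R s φ ∧ Sat interp R s ψ
  | .disj φ ψ => Sat interp R s φ ∨ Sat interp R s ψ
  | .neg φ => ¬ Sat interp R s φ

/-- Satisfaction of a universal axiom relative to an instruction set `I` and a
happens-before relation `R`: the body must hold for every injective assignment
of the variables to instructions of `I`. -/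
def SatAx {Core Stage Op PSym : Type} {ar : PSym → ℕ}
    (interp : ∀ p : PSym, (Fin (ar p) → Op) → Prop)
    (I : Set (Instr Core Op))
    (R : Event Core Stage Op → Event Core Stage Op → Prop)
    (ax : UAxiom Stage PSym ar) : Prop :=
  ∀ s : Fin ax.k → Instr Core Op, Function.Injective s → (∀ a, s a ∈ I) →
    Sat interp R s ax.phi

/-- Acyclicity of an edge relation. -/
def Acyclic {α : Type} (E : α → α → Prop) : Prop :=
  ∀ x, ¬ Relation.TransGen E x x

/-- `E` is (the edge relation of) a μhb graph on vertex set `V`: all edges are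
between vertices of `V` and the graph is acyclic (a DAG). -/
def IsMuHb {Core Stage Op : Type} (V : Set (Event Core Stage Op))
    (E : Event Core Stage Op → Event Core Stage Op → Prop) : Prop :=
  (∀ e1 e2, E e1 e2 → e1 ∈ V ∧ e2 ∈ V) ∧ Acyclic E

/-- Satisfaction of a universal axiom by a μhb graph (with edges `E`) relative
to an instruction set `I`: happens-before is the transitive closure of `E`. -/
def GraphSatAx {Core Stage Op PSym : Type} {ar : PSym → ℕ}
    (interp : ∀ p : PSym, (Fin (ar p) → Op) → Prop)
    (I : Set (Instr Core Op))
    (E : Event Core Stage Op → Event Core Stage Op → Prop)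
    (ax : UAxiom Stage PSym ar) : Prop :=
  SatAx interp I (Relation.TransGen E) ax

/-- `G ⊨_P A`: the μhb graph with edges `E` satisfies every axiom of the
axiomatic semantics `A` for program `P`. -/
def Models {Core Stage Op PSym : Type} {ar : PSym → ℕ}
    (interp : ∀ p : PSym, (Fin (ar p) → Op) → Prop)
    (P : Program Core Op)
    (E : Event Core Stage Op → Event Core Stage Op → Prop)
    (A : List (UAxiom Stage PSym ar)) : Prop :=
  ∀ ax ∈ A, GraphSatAx interp (instrs P) E ax

/-- `G ⊑ G'` (on a common vertex set): `E⁺ ⊆ E'⁺`. -/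
def Refines {Core Stage Op : Type}
    (E E' : Event Core Stage Op → Event Core Stage Op → Prop) : Prop :=
  ∀ e1 e2, Relation.TransGen E e1 e2 → Relation.TransGen E' e1 e2

/-- A graph is linear on `V` if its transitive closure totally orders `V`. -/
def Linear {Core Stage Op : Type} (V : Set (Event Core Stage Op))
    (E : Event Core Stage Op → Event Core Stage Op → Prop) : Prop :=
  ∀ e1 ∈ V, ∀ e2 ∈ V, e1 ≠ e2 →
    Relation.TransGen E e1 e2 ∨ Relation.TransGen E e2 e1

/-- Refinability of an axiomatic semantics: for every program, every
linearization of a valid μhb graph is valid. -/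
def Refinable {Core Stage Op PSym : Type} {ar : PSym → ℕ}
    (interp : ∀ p : PSym, (Fin (ar p) → Op) → Prop)
    (A : List (UAxiom Stage PSym ar)) : Prop :=
  ∀ (P : Program Core Op)
    (E E' : Event Core Stage Op → Event Core Stage Op → Prop),
    IsMuHb (events Stage P) E → Models interp P E A →
    IsMuHb (events Stage P) E' → Linear (events Stage P) E' → Refines E E' →
    Models interp P E' A

/-- The strict order of a list: `x` occurs (at some position) strictly before
`y`.  For a duplicate-free list this is the happens-before relation of the
linear μhb graph `σ[0] → σ[1] → ⋯`. -/
def listEdge {α : Type} (σ : List α) (x y : α) : Prop :=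
  ∃ m n : ℕ, m < n ∧ σ[m]? = some x ∧ σ[n]? = some y

/-- `σ ∈ events(P)^perm`: the word `σ` contains each event of `P` exactly
once. -/
def IsPermTrace {Core Stage Op : Type} (P : Program Core Op)
    (σ : List (Event Core Stage Op)) : Prop :=
  σ.Nodup ∧ ∀ e, e ∈ σ ↔ e ∈ events Stage P

/-- `σ` is a linearization of the μhb graph with edges `E` on `events(P)`. -/
def IsLinearization {Core Stage Op : Type} (P : Program Core Op)
    (E : Event Core Stage Op → Event Core Stage Op → Prop)
    (σ : List (Event Core Stage Op)) : Prop :=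
  IsPermTrace P σ ∧ ∀ e1 e2, Relation.TransGen E e1 e2 → listEdge σ e1 e2

/-- Satisfaction of an axiomatic semantics by a trace `σ`, viewed as the
linear μhb graph `σ[0] → σ[1] → ⋯`. -/
def TraceModels {Core Stage Op PSym : Type} {ar : PSym → ℕ}
    (interp : ∀ p : PSym, (Fin (ar p) → Op) → Prop)
    (P : Program Core Op) (σ : List (Event Core Stage Op))
    (A : List (UAxiom Stage PSym ar)) : Prop :=
  ∀ ax ∈ A, SatAx interp (instrs P) (listEdge σ) ax

/-- Positions in the trace `σ` at which an event of instruction `i` occurs. -/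
def evIdx {Core Stage Op : Type} (σ : List (Event Core Stage Op))
    (i : Instr Core Op) : Set ℕ :=
  {n | ∃ st, σ[n]? = some ⟨i, st⟩}

/-- `start(i)`: least position of an event of `i` in `σ`. -/
noncomputable def startIdx {Core Stage Op : Type} (σ : List (Event Core Stage Op))
    (i : Instr Core Op) : ℕ :=
  sInf (evIdx σ i)

/-- `end(i)`: greatest position of an event of `i` in `σ`. -/
noncomputable def endIdx {Core Stage Op : Type} (σ : List (Event Core Stage Op))
    (i : Instr Core Op) : ℕ :=
  sSup (evIdx σ i)

/-- `pfxend(i)`: max of `end(i')` over `i' = i` or `i' <_r i`. -/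
noncomputable def pfxend {Core Stage Op : Type} (P : Program Core Op)
    (σ : List (Event Core Stage Op)) (i : Instr Core Op) : ℕ :=
  sSup {n | ∃ i' ∈ instrs P, (i' = i ∨ refLt i' i) ∧ n = endIdx σ i'}

/-- `coup(i1, i2)`: the intervals `[start(i1), pfxend(i1)]` and
`[start(i2), pfxend(i2)]` overlap. -/
def coup {Core Stage Op : Type} (P : Program Core Op)
    (σ : List (Event Core Stage Op)) (i1 i2 : Instr Core Op) : Prop :=
  startIdx σ i1 ≤ pfxend P σ i2 ∧ startIdx σ i2 ≤ pfxend P σ i1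

/-- `diff_r(i1, i2) = label(i2) − label(i1)` (for same-core instructions). -/
def diffR {Core Op : Type} (i1 i2 : Instr Core Op) : ℤ :=
  (i2.lbl : ℤ) - (i1.lbl : ℤ)

/-- `σ` is `t`-reordering bounded. -/
def TReorderBounded {Core Stage Op : Type} (t : ℕ) (P : Program Core Op)
    (σ : List (Event Core Stage Op)) : Prop :=
  ∀ i1 ∈ instrs P, ∀ i2 ∈ instrs P, i1.core = i2.core →
    ((∃ m n : ℕ, m < n ∧ (∃ st, σ[m]? = some ⟨i2, st⟩) ∧
        (∃ st, σ[n]? = some ⟨i1, st⟩)) → diffR i1 i2 < (t : ℤ)) ∧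
    ((∃ i ∈ instrs P, coup P σ i1 i ∧ coup P σ i i2) → |diffR i1 i2| < (t : ℤ))

/-- `CM(j)`: instructions all of whose events occur among the first `j`
events of `σ`. -/
def CM {Core Stage Op : Type} (P : Program Core Op)
    (σ : List (Event Core Stage Op)) (j : ℕ) : Set (Instr Core Op) :=
  {i ∈ instrs P | ∀ n ∈ evIdx σ i, n < j}

/-- `NF(j)`: instructions none of whose events occur among the first `j`
events of `σ`. -/
def NF {Core Stage Op : Type} (P : Program Core Op)
    (σ : List (Event Core Stage Op)) (j : ℕ) : Set (Instr Core Op) :=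
  {i ∈ instrs P | ∀ n ∈ evIdx σ i, j ≤ n}

/-- `pCM(j)`: the prefix-closed set of completed instructions. -/
def pCM {Core Stage Op : Type} (P : Program Core Op)
    (σ : List (Event Core Stage Op)) (j : ℕ) : Set (Instr Core Op) :=
  {i ∈ instrs P | ∀ i' ∈ instrs P, (i' = i ∨ refLt i' i) → i' ∈ CM P σ j}

/-- `pNF(j)`: the postfix-closed set of unfetched instructions. -/
def pNF {Core Stage Op : Type} (P : Program Core Op)
    (σ : List (Event Core Stage Op)) (j : ℕ) : Set (Instr Core Op) :=
  {i ∈ instrs P | ∀ i' ∈ instrs P, (i' = i ∨ refLt i i') → i' ∈ NF P σ j}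

/-- `IP(j)`: the in-progress instructions. -/
def IP {Core Stage Op : Type} (P : Program Core Op)
    (σ : List (Event Core Stage Op)) (j : ℕ) : Set (Instr Core Op) :=
  instrs P \ (pCM P σ j ∪ pNF P σ j)

/-- `i` and `i'` are `k`-coupled: there is a chain of `k` couplings from `i`
to `i'` through instructions of `P`. -/
def kCoupled {Core Stage Op : Type} (P : Program Core Op)
    (σ : List (Event Core Stage Op)) (k : ℕ) (i i' : Instr Core Op) : Prop :=
  ∃ f : Fin (k + 1) → Instr Core Op, f 0 = i ∧ f (Fin.last k) = i' ∧
    (∀ m, f m ∈ instrs P) ∧ ∀ m : Fin k, coup P σ (f m.castSucc) (f m.succ)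

/-- `AC_k(j)`: instructions of `pCM(j) ∪ IP(j)` that are `k`-coupled with some
in-progress instruction. -/
def AC {Core Stage Op : Type} (P : Program Core Op)
    (σ : List (Event Core Stage Op)) (k j : ℕ) : Set (Instr Core Op) :=
  {i ∈ pCM P σ j ∪ IP P σ j | ∃ i' ∈ IP P σ j, kCoupled P σ k i i'}

section Aux

variable {Core Stage Op : Type} {P : Program Core Op}
  {σ : List (Event Core Stage Op)}

lemma evIdx_lt_length {i : Instr Core Op} {n : ℕ} (h : n ∈ evIdx σ i) :
    n < σ.length := by
  obtain ⟨st, hst⟩ := h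
  exact (List.getElem?_eq_some_iff.mp hst).1

lemma evIdx_bddAbove (i : Instr Core Op) : BddAbove (evIdx σ i) :=
  ⟨σ.length, fun n hn => (evIdx_lt_length hn).le⟩

lemma le_endIdx {i : Instr Core Op} {n : ℕ} (h : n ∈ evIdx σ i) :
    n ≤ endIdx σ i := le_csSup (evIdx_bddAbove i) h

lemma startIdx_le {i : Instr Core Op} {n : ℕ} (h : n ∈ evIdx σ i) :
    startIdx σ i ≤ n := Nat.sInf_le h

lemma endIdx_le_length (i : Instr Core Op) : endIdx σ i ≤ σ.length := by
  rcases Set.eq_empty_or_nonempty (evIdx σ i) with h | h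
  · simp [endIdx, h]
  · exact csSup_le h fun n hn => (evIdx_lt_length hn).le

lemma startIdx_le_endIdx (i : Instr Core Op) : startIdx σ i ≤ endIdx σ i := by
  rcases Set.eq_empty_or_nonempty (evIdx σ i) with h | h
  · simp [startIdx, h]
  · obtain ⟨n, hn⟩ := h
    exact le_trans (startIdx_le hn) (le_endIdx hn)

lemma pfxend_bddAbove (i : Instr Core Op) :
    BddAbove {n | ∃ i' ∈ instrs P, (i' = i ∨ refLt i' i) ∧ n = endIdx σ i'} := by
  refine ⟨σ.length, fun n hn => ?_⟩
  obtain ⟨i', _, _, rfl⟩ := hn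
  exact endIdx_le_length i'

lemma endIdx_le_pfxend {i i' : Instr Core Op} (h : i' ∈ instrs P)
    (hrel : i' = i ∨ refLt i' i) : endIdx σ i' ≤ pfxend P σ i :=
  le_csSup (pfxend_bddAbove i) ⟨i', h, hrel, rfl⟩

lemma startIdx_le_pfxend {i : Instr Core Op} (h : i ∈ instrs P) :
    startIdx σ i ≤ pfxend P σ i :=
  le_trans (startIdx_le_endIdx i) (endIdx_le_pfxend h (Or.inl rfl))

lemma coup_refl {i : Instr Core Op} (h : i ∈ instrs P) : coup P σ i i :=
  ⟨startIdx_le_pfxend h, startIdx_le_pfxend h⟩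

lemma coup_symm {a b : Instr Core Op} (h : coup P σ a b) : coup P σ b a :=
  ⟨h.2, h.1⟩

lemma instr_eq {a b : Instr Core Op} (ha : a ∈ instrs P) (hb : b ∈ instrs P)
    (hc : a.core = b.core) (hl : a.lbl = b.lbl) : a = b := by
  obtain ⟨c, l, o⟩ := a
  obtain ⟨c', l', o'⟩ := b
  simp only at hc hl
  subst hc; subst hl
  simp only [instrs, Set.mem_setOf_eq] at ha hb
  simp only [Instr.mk.injEq, true_and]
  rw [ha] at hb
  exact Option.some_injective _ hb

/-- Counting lemma: a set of instructions of `P` whose labels per core lie in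
a window of width `w` has at most `|Core| * w` elements. -/
lemma ncard_le_of_window [Fintype Core] {S : Set (Instr Core Op)} (w : ℕ)
    (hS : S ⊆ instrs P)
    (h : ∀ a ∈ S, ∀ b ∈ S, a.core = b.core → b.lbl < a.lbl + w) :
    S.Finite ∧ S.ncard ≤ Fintype.card Core * w := by
  classical
  rcases Nat.eq_zero_or_pos w with rfl | hw
  · rcases Set.eq_empty_or_nonempty S with rfl | ⟨a, ha⟩
    · simp
    · exact absurd (h a ha a ha rfl) (by omega)
  set m : Core → ℕ := fun c => sInf {l | ∃ a ∈ S, a.core = c ∧ a.lbl = l} with hm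
  have hmem : ∀ a ∈ S, m a.core ≤ a.lbl ∧ a.lbl < m a.core + w := by
    intro a ha
    have hne : {l | ∃ x ∈ S, x.core = a.core ∧ x.lbl = l}.Nonempty :=
      ⟨a.lbl, a, ha, rfl, rfl⟩
    have h1 : m a.core ≤ a.lbl := Nat.sInf_le ⟨a, ha, rfl, rfl⟩
    obtain ⟨b, hb, hbc, hbl⟩ := Nat.sInf_mem hne
    have hbm : m a.core = b.lbl := hbl.symm
    refine ⟨h1, ?_⟩
    have := h b hb a ha hbc
    omega
  set f : Instr Core Op → Core × Fin w :=
    fun a => (a.core, ⟨min (a.lbl - m a.core) (w - 1), by omega⟩) with hf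
  have hinj : Set.InjOn f S := by
    intro a ha b hb hab
    have h1 : a.core = b.core := congrArg Prod.fst hab
    have h2 : min (a.lbl - m a.core) (w - 1) = min (b.lbl - m b.core) (w - 1) :=
      congrArg (fun p : Core × Fin w => (p.2 : ℕ)) hab
    have hma := hmem a ha
    have hmb := hmem b hb
    have e1 : min (a.lbl - m a.core) (w - 1) = a.lbl - m a.core :=
      min_eq_left (by omega)
    have e2 : min (b.lbl - m b.core) (w - 1) = b.lbl - m b.core :=
      min_eq_left (by omega)
    rw [e1, e2] at h2
    rw [h1] at hma h2
    refine instr_eq (hS ha) (hS hb) h1 ?_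
    omega
  have hfin : S.Finite := by
    refine Set.Finite.of_finite_image ?_ hinj
    exact Set.Finite.subset (Set.finite_univ) (Set.subset_univ _)
  refine ⟨hfin, ?_⟩
  have := Set.ncard_le_ncard_of_injOn f (fun a _ => Set.mem_univ (f a)) hinj
    Set.finite_univ
  simpa [Set.ncard_univ, Nat.card_eq_fintype_card] using this

/-- The coupling neighborhood of an instruction. -/
def NBD (P : Program Core Op) (σ : List (Event Core Stage Op))
    (x : Instr Core Op) : Set (Instr Core Op) :=
  {y ∈ instrs P | coup P σ y x}

lemma nbd_bound [Fintype Core] {t : ℕ} (hbd : TReorderBounded t P σ)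
    {x : Instr Core Op} (hx : x ∈ instrs P) :
    (NBD P σ x).Finite ∧ (NBD P σ x).ncard ≤ Fintype.card Core * t := by
  refine ncard_le_of_window t (fun y hy => hy.1) ?_
  intro a ha b hb hc
  have h2 := (hbd a ha.1 b hb.1 hc).2 ⟨x, hx, ha.2, coup_symm hb.2⟩
  unfold diffR at h2
  rw [abs_lt] at h2
  omega

/-- From an in-progress instruction we extract a "straddling" successor `s`
(with an event before `j` and prefix-end at or after `j`) and a predecessor
witness `prd` with an event at or after `j`. -/
lemma IP_straddle {j : ℕ} {i : Instr Core Op} (hi : i ∈ IP P σ j) :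
    ∃ s prd : Instr Core Op, s ∈ instrs P ∧ prd ∈ instrs P ∧
      s.core = i.core ∧ i.lbl ≤ s.lbl ∧ prd.core = i.core ∧ prd.lbl ≤ i.lbl ∧
      startIdx σ s < j ∧ j ≤ pfxend P σ s ∧
      (∃ n, n ∈ evIdx σ s ∧ n < j) ∧ (∃ mm, mm ∈ evIdx σ prd ∧ j ≤ mm) := by
  obtain ⟨hiP, hnot⟩ := hi
  have hpCM : i ∉ pCM P σ j := fun h => hnot (Or.inl h)
  have hpNF : i ∉ pNF P σ j := fun h => hnot (Or.inr h)
  -- predecessor witness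
  simp only [pCM, Set.mem_setOf_eq, not_and, not_forall] at hpCM
  obtain ⟨prd, hprdP, hrel, hprdCM⟩ := hpCM hiP
  have hprdev : ∃ mm, mm ∈ evIdx σ prd ∧ j ≤ mm := by
    simp only [CM, Set.mem_setOf_eq, not_and, not_forall] at hprdCM
    obtain ⟨mm, hmm, hmmlt⟩ := hprdCM hprdP
    exact ⟨mm, hmm, le_of_not_gt hmmlt⟩
  -- successor witness
  simp only [pNF, Set.mem_setOf_eq, not_and, not_forall] at hpNF
  obtain ⟨s, hsP, hrel', hsNF⟩ := hpNF hiP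
  have hsev : ∃ n, n ∈ evIdx σ s ∧ n < j := by
    simp only [NF, Set.mem_setOf_eq, not_and, not_forall] at hsNF
    obtain ⟨n, hn, hnlt⟩ := hsNF hsP
    exact ⟨n, hn, lt_of_not_ge hnlt⟩
  have hscore : s.core = i.core := by
    rcases hrel' with rfl | hlt
    · rfl
    · exact hlt.1.symm
  have hslbl : i.lbl ≤ s.lbl := by
    rcases hrel' with rfl | hlt
    · exact le_refl _
    · exact hlt.2.le
  have hpcore : prd.core = i.core := by
    rcases hrel with rfl | hlt
    · rfl
    · exact hlt.1
  have hplbl : prd.lbl ≤ i.lbl := by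
    rcases hrel with rfl | hlt
    · exact le_refl _
    · exact hlt.2.le
  obtain ⟨n, hn, hnlt⟩ := hsev
  obtain ⟨mm, hmm, hmmle⟩ := hprdev
  have hrel2 : prd = s ∨ refLt prd s := by
    rcases Nat.lt_or_ge prd.lbl s.lbl with hlt | hge
    · exact Or.inr ⟨hpcore.trans hscore.symm, hlt⟩
    · have : prd.lbl = s.lbl := le_antisymm (hplbl.trans hslbl) hge
      exact Or.inl (instr_eq hprdP hsP (hpcore.trans hscore.symm) this)
  refine ⟨s, prd, hsP, hprdP, hscore, hslbl, hpcore, hplbl, ?_, ?_, ⟨n, hn, hnlt⟩,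
    ⟨mm, hmm, hmmle⟩⟩
  · exact lt_of_le_of_lt (startIdx_le hn) hnlt
  · exact le_trans hmmle (le_trans (le_endIdx hmm) (endIdx_le_pfxend hprdP hrel2))

/-- The labels of same-core in-progress instructions lie within a window of
width `2t`. -/
lemma IP_window {t j : ℕ} (hbd : TReorderBounded t P σ) :
    ∀ a ∈ IP P σ j, ∀ b ∈ IP P σ j, a.core = b.core → b.lbl < a.lbl + 2 * t := by
  intro a ha b hb hc
  obtain ⟨sa, pa, hsa, hpa, hsac, hsal, hpac, hpal, hsta, hpfa, ⟨na, hna, hnaj⟩,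
    ⟨ma, hma, hmaj⟩⟩ := IP_straddle ha
  obtain ⟨sb, pb, hsb, hpb, hsbc, hsbl, hpbc, hpbl, hstb, hpfb, ⟨nb, hnb, hnbj⟩,
    ⟨mb, hmb, hmbj⟩⟩ := IP_straddle hb
  have hcoup : coup P σ sa sb :=
    ⟨le_trans hsta.le hpfb, le_trans hstb.le hpfa⟩
  have hcc : sa.core = sb.core := by rw [hsac, hsbc, hc]
  have h2 := (hbd sa hsa sb hsb hcc).2 ⟨sb, hsb, hcoup, coup_refl hsb⟩
  -- event of sa at na < j ≤ ma : event of pa : gives sa.lbl < pa.lbl + t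
  obtain ⟨sta, hsta'⟩ := hna
  obtain ⟨stpa, hstpa⟩ := hma
  have h1 := (hbd pa hpa sa hsa (hpac.trans hsac.symm)).1
    ⟨na, ma, by omega, ⟨sta, hsta'⟩, ⟨stpa, hstpa⟩⟩
  unfold diffR at h1 h2
  rw [abs_lt] at h2
  omega

lemma IP_bound [Fintype Core] {t j : ℕ} (hbd : TReorderBounded t P σ) :
    (IP P σ j).Finite ∧ (IP P σ j).ncard ≤ Fintype.card Core * (2 * t) :=
  ncard_le_of_window (2 * t) (fun i hi => hi.1) (IP_window hbd)

lemma kCoupled_succ {m : ℕ} {i i' : Instr Core Op}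
    (h : kCoupled P σ (m + 1) i i') :
    ∃ y, y ∈ instrs P ∧ coup P σ i y ∧ kCoupled P σ m y i' := by
  obtain ⟨f, hf0, hfl, hfP, hfc⟩ := h
  refine ⟨f 1, hfP 1, ?_, fun p => f ⟨p.val + 1, by omega⟩, ?_, ?_,
    fun p => hfP _, fun p => ?_⟩
  · have h0 := hfc 0
    rw [Fin.castSucc_zero, Fin.succ_zero_eq_one, hf0] at h0
    exact h0
  · show f ⟨1, by omega⟩ = f 1
    exact congrArg f (Fin.ext (by simp))
  · show f ⟨m + 1, by omega⟩ = i'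
    rw [← hfl]
    exact congrArg f (Fin.ext (by simp [Fin.last]))
  · have hc := hfc ⟨p.val + 1, by omega⟩
    have e1 : ((⟨p.val + 1, by omega⟩ : Fin (m + 1)).castSucc : Fin (m + 2)) =
        ⟨(p.castSucc : Fin (m + 1)).val + 1, by omega⟩ := Fin.ext (by simp)
    have e2 : ((⟨p.val + 1, by omega⟩ : Fin (m + 1)).succ : Fin (m + 2)) =
        ⟨(p.succ : Fin (m + 1)).val + 1, by omega⟩ := Fin.ext (by simp)
    rw [e1, e2] at hc
    exact hc

/-- The `m`-step active set: instructions `m`-coupled with some in-progress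
instruction. -/
def RS (P : Program Core Op) (σ : List (Event Core Stage Op)) (j m : ℕ) :
    Set (Instr Core Op) :=
  {i ∈ instrs P | ∃ i' ∈ IP P σ j, kCoupled P σ m i i'}

lemma finite_biUnion_ncard_le {α β : Type} {U : Set α} (hU : U.Finite)
    {N : α → Set β} {d : ℕ} (hN : ∀ y ∈ U, (N y).Finite ∧ (N y).ncard ≤ d) :
    (⋃ y ∈ U, N y).Finite ∧ (⋃ y ∈ U, N y).ncard ≤ U.ncard * d := by
  refine Set.Finite.induction_on
    (motive := fun U _ => (∀ y ∈ U, (N y).Finite ∧ (N y).ncard ≤ d) →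
      (⋃ y ∈ U, N y).Finite ∧ (⋃ y ∈ U, N y).ncard ≤ U.ncard * d)
    U hU (by simp) ?_ hN
  intro a U haU hUfin ih hN
  · have hN' : ∀ y ∈ U, (N y).Finite ∧ (N y).ncard ≤ d :=
      fun y hy => hN y (Set.mem_insert_of_mem a hy)
    obtain ⟨ihf, ihc⟩ := ih hN'
    have hNa := hN a (Set.mem_insert a U)
    have heq : (⋃ y ∈ insert a U, N y) = N a ∪ ⋃ y ∈ U, N y :=
      Set.biUnion_insert a U N
    rw [heq]
    refine ⟨hNa.1.union ihf, ?_⟩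
    calc (N a ∪ ⋃ y ∈ U, N y).ncard ≤ (N a).ncard + (⋃ y ∈ U, N y).ncard :=
          Set.ncard_union_le _ _
      _ ≤ d + U.ncard * d := Nat.add_le_add hNa.2 ihc
      _ = (insert a U).ncard * d := by
          rw [Set.ncard_insert_of_notMem haU hUfin]; ring

lemma RS_bound [Fintype Core] {t j : ℕ} (hbd : TReorderBounded t P σ)
    (m : ℕ) : (RS P σ j m).Finite ∧
      (RS P σ j m).ncard ≤
        Fintype.card Core * (2 * t) * (Fintype.card Core * t) ^ m := by
  induction m with
  | zero =>
    have hsub : RS P σ j 0 ⊆ IP P σ j := by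
      intro i hi
      obtain ⟨hiP, i', hi', f, hf0, hfl, _, _⟩ := hi
      have : i = i' := by rw [← hf0, ← hfl]; rfl
      rw [this]; exact hi'
    obtain ⟨hfin, hc⟩ := IP_bound (σ := σ) (j := j) hbd
    exact ⟨hfin.subset hsub, by
      simpa using le_trans (Set.ncard_le_ncard hsub hfin) hc⟩
  | succ m ih =>
    obtain ⟨ihf, ihc⟩ := ih
    have hsub : RS P σ j (m + 1) ⊆ ⋃ y ∈ RS P σ j m, NBD P σ y := by
      intro i hi
      obtain ⟨hiP, i', hi', hk⟩ := hi
      obtain ⟨y, hyP, hcoup, hk'⟩ := kCoupled_succ hk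
      exact Set.mem_biUnion ⟨hyP, i', hi', hk'⟩ ⟨hiP, hcoup⟩
    obtain ⟨hUf, hUc⟩ := finite_biUnion_ncard_le ihf
      (fun y hy => nbd_bound hbd hy.1)
    refine ⟨hUf.subset hsub, ?_⟩
    calc (RS P σ j (m + 1)).ncard ≤ (⋃ y ∈ RS P σ j m, NBD P σ y).ncard :=
          Set.ncard_le_ncard hsub hUf
      _ ≤ (RS P σ j m).ncard * (Fintype.card Core * t) := hUc
      _ ≤ Fintype.card Core * (2 * t) * (Fintype.card Core * t) ^ m *
            (Fintype.card Core * t) :=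
          Nat.mul_le_mul_right _ ihc
      _ = Fintype.card Core * (2 * t) * (Fintype.card Core * t) ^ (m + 1) := by
          rw [pow_succ]; ring

end Aux

/-- **Bound on `k`-active instructions** (Lemma 5): for every `k` and `t`
there is a bound `b_k` — depending only on `k`, `t` and `|Cores|`, not on the
program — such that for every program `P`, every `t`-reordering bounded trace
`σ ∈ events(P)^perm`, and every index `0 ≤ j ≤ |σ|`,
`|AC_k(j)| ≤ b_k`. -/
theorem AC_card_le
    (Core : Type) [Fintype Core] (k t : ℕ) :
    ∃ b : ℕ, ∀ (Stage Op : Type) (P : Program Core Op)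
      (σ : List (Event Core Stage Op)),
      IsPermTrace P σ → TReorderBounded t P σ →
      ∀ j ≤ σ.length, (AC P σ k j).ncard ≤ b := by
  refine ⟨Fintype.card Core * (2 * t) * (Fintype.card Core * t) ^ k,
    fun Stage Op P σ _ hbd j _ => ?_⟩
  obtain ⟨hfin, hc⟩ := RS_bound (σ := σ) (j := j) hbd k
  have hsub : AC P σ k j ⊆ RS P σ j k := by
    intro i hi
    obtain ⟨hmem, hk⟩ := hi
    refine ⟨?_, hk⟩
    rcases hmem with h | h
    · exact h.1
    · exact h.1
  exact le_trans (Set.ncard_le_ncard hsub hfin) hc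

end USpec
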